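/- Every maximal independent set of the Andrásfai graph Γ_d consists of exactly d cyclically consecutive vertices. -/

import Mathlib

/-- The Andrásfai graph `Γ_d`: vertex set `ZMod (3*d-1)`, with `x` adjacent to `y`
iff `y - x ∈ {d, ..., 2*d-1}` (the condition is symmetrized). -/
def andrasfai (d : ℕ) : SimpleGraph (ZMod (3 * d - 1)) where
  Adj x y := x ≠ y ∧ ((d ≤ (y - x).val ∧ (y - x).val ≤ 2 * d - 1) ∨
      (d ≤ (x - y).val ∧ (x - y).val ≤ 2 * d - 1))
  symm := ⟨fun x y h => ⟨h.1.symm, h.2.symm⟩⟩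
  loopless := ⟨fun x h => h.1 rfl⟩
/-- `S` is an independent set of `G`. -/
def IndepSet {V : Type*} (G : SimpleGraph V) (S : Set V) : Prop :=
  S.Pairwise fun a b => ¬ G.Adj a b

private lemma val_sub_or (n : ℕ) [NeZero n] (x y : ZMod n) :
    (x - y).val + y.val = x.val ∨ (x - y).val + y.val = x.val + n := by
  have h : ((x - y) + y).val = ((x - y).val + y.val) % n := ZMod.val_add _ _
  rw [sub_add_cancel] at h
  have h1 : (x - y).val < n := ZMod.val_lt _
  have h2 : y.val < n := ZMod.val_lt _
  rcases Nat.lt_or_ge ((x - y).val + y.val) n with hlt | hge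
  · left; rw [Nat.mod_eq_of_lt hlt] at h; omega
  · right
    have : ((x - y).val + y.val) % n = (x - y).val + y.val - n := by
      rw [Nat.mod_eq_sub_mod hge, Nat.mod_eq_of_lt (by omega)]
    omega

private lemma interval_indep (d : ℕ) (hd : 1 ≤ d) (a : ZMod (3 * d - 1)) :
    IndepSet (andrasfai d) {x | ∃ i : ℕ, i < d ∧ x = a + (i : ZMod (3 * d - 1))} := by
  haveI : NeZero (3 * d - 1) := ⟨by omega⟩
  rintro x ⟨i, hi, rfl⟩ y ⟨j, hj, rfl⟩ hne hadj
  have hvi : ((i : ZMod (3 * d - 1))).val = i := ZMod.val_cast_of_lt (by omega)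
  have hvj : ((j : ZMod (3 * d - 1))).val = j := ZMod.val_cast_of_lt (by omega)
  have e1 : (a + (j : ZMod (3 * d - 1))) - (a + (i : ZMod (3 * d - 1)))
      = (j : ZMod (3 * d - 1)) - (i : ZMod (3 * d - 1)) := by ring
  have e2 : (a + (i : ZMod (3 * d - 1))) - (a + (j : ZMod (3 * d - 1)))
      = (i : ZMod (3 * d - 1)) - (j : ZMod (3 * d - 1)) := by ring
  have d1 := val_sub_or (3 * d - 1) (j : ZMod (3 * d - 1)) (i : ZMod (3 * d - 1))
  have d2 := val_sub_or (3 * d - 1) (i : ZMod (3 * d - 1)) (j : ZMod (3 * d - 1))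
  rw [hvi, hvj] at d1
  rw [hvi, hvj] at d2
  obtain ⟨-, h | h⟩ := hadj
  · rw [e1] at h; omega
  · rw [e2] at h; omega

/-- Every maximal independent set of the Andrásfai graph `Γ_d` consists of `d`
cyclically consecutive vertices. -/
theorem maximal_indep_andrasfai_consecutive (d : ℕ) (hd : 1 ≤ d)
    (S : Set (ZMod (3 * d - 1))) (hS : IndepSet (andrasfai d) S)
    (hmax : ∀ T : Set (ZMod (3 * d - 1)), IndepSet (andrasfai d) T → S ⊆ T → T = S) :
    ∃ a : ZMod (3 * d - 1), S = {x | ∃ i : ℕ, i < d ∧ x = a + (i : ZMod (3 * d - 1))} := by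
  haveI : NeZero (3 * d - 1) := ⟨by omega⟩
  suffices h : ∃ a : ZMod (3 * d - 1),
      S ⊆ {x | ∃ i : ℕ, i < d ∧ x = a + (i : ZMod (3 * d - 1))} by
    obtain ⟨a, hsub⟩ := h
    exact ⟨a, (hmax _ (interval_indep d hd a) hsub).symm⟩
  by_cases hne : S.Nonempty
  swap
  · refine ⟨0, ?_⟩
    rw [Set.not_nonempty_iff_eq_empty.mp hne]
    exact Set.empty_subset _
  obtain ⟨s, hs⟩ := hne
  -- nonadjacency facts
  have key : ∀ t ∈ S, ∀ u ∈ S, t ≠ u →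
      ¬ (d ≤ (u - t).val ∧ (u - t).val ≤ 2 * d - 1) ∧
      ¬ (d ≤ (t - u).val ∧ (t - u).val ≤ 2 * d - 1) := by
    intro t ht u hu htu
    have := hS ht hu htu
    simp only [andrasfai, ne_eq, not_and, not_or] at this
    obtain ⟨h1, h2⟩ := this htu
    exact ⟨fun h => h1 h.1 h.2, fun h => h2 h.1 h.2⟩
  have hv : ∀ t ∈ S, (t - s).val < d ∨ 2 * d ≤ (t - s).val := by
    intro t ht
    by_cases hts : t = s
    · subst hts; left; simp [ZMod.val_zero]; omega
    · have := (key s hs t ht (Ne.symm hts)).1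
      omega
  -- membership via val bound
  have mem_of_val_lt : ∀ (b t : ZMod (3 * d - 1)), (t - b).val < d →
      t ∈ {x | ∃ i : ℕ, i < d ∧ x = b + (i : ZMod (3 * d - 1))} := by
    intro b t h
    refine ⟨(t - b).val, h, ?_⟩
    rw [ZMod.natCast_zmod_val]
    ring
  by_cases hB : ∃ t ∈ S, 2 * d ≤ (t - s).val
  · -- take b with minimal (b - s).val among those ≥ 2d
    set B : Set ℕ := {v : ℕ | ∃ t ∈ S, (t - s).val = v ∧ 2 * d ≤ v} with hBdef
    have hBne : B.Nonempty := by
      obtain ⟨t, ht, h2⟩ := hB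
      exact ⟨(t - s).val, t, ht, rfl, h2⟩
    obtain ⟨b, hb, hbval, hbge⟩ := Nat.sInf_mem hBne
    set m := sInf B with hm
    refine ⟨b, fun t ht => ?_⟩
    apply mem_of_val_lt
    by_cases htb : t = b
    · subst htb; simp [ZMod.val_zero]; omega
    have e1 : (t - s) - (b - s) = t - b := by ring
    have e2 : (b - s) - (t - s) = b - t := by ring
    have d1 := val_sub_or (3 * d - 1) (t - s) (b - s)
    have d2 := val_sub_or (3 * d - 1) (b - s) (t - s)
    rw [e1, hbval] at d1
    rw [e2, hbval] at d2
    have hw := ZMod.val_lt (t - b)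
    have hu := ZMod.val_lt (b - t)
    have hvlt := ZMod.val_lt (t - s)
    have hmlt : m < 3 * d - 1 := hbval ▸ ZMod.val_lt (b - s)
    have hvt := hv t ht
    have hmin : 2 * d ≤ (t - s).val → m ≤ (t - s).val := fun h2 =>
      Nat.sInf_le ⟨t, ht, rfl, h2⟩
    have hnadj := key t ht b hb htb
    omega
  · push_neg at hB
    refine ⟨s, fun t ht => ?_⟩
    apply mem_of_val_lt
    rcases hv t ht with h | h
    · exact h
    · exact absurd h (by exact Nat.not_le.mpr (Nat.lt_of_not_le (fun hle => (Nat.not_le.mpr (hB t ht)) hle)))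

/-- check -/
example : True := trivial
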